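/- Let $I$ be an ideal of a commutative ring whose symbolic Rees algebra has generation type $d$, and let $h$ be a positive integer such that $I^{(i)} \subseteq I^{\lceil i/h \rceil}$ for all $1 \leq i \leq d$. Then $I^{(hn - h + 1)} \subseteq I^n$ for all $n \geq 1$. -/

import Mathlib

private lemma ideal_prod_le_prod {R : Type*} [CommRing R] {ι : Type*} (s : Finset ι)
    (f g : ι → Ideal R) (h : ∀ i ∈ s, f i ≤ g i) : ∏ i ∈ s, f i ≤ ∏ i ∈ s, g i := by
  classical
  induction s using Finset.induction with
  | empty => simp
  | insert x s hx ih =>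
    rw [Finset.prod_insert hx, Finset.prod_insert hx]
    exact mul_le_mul' (h _ (Finset.mem_insert_self _ _))
      (ih fun i hi => h i (Finset.mem_insert_of_mem hi))


/-- If the symbolic Rees algebra of `I` has generation type `d` and
`I^{(i)} ⊆ I^{⌈i/h⌉}` for all `1 ≤ i ≤ d`, then `I^{(hn-h+1)} ⊆ I^n` for all `n ≥ 1`.
Here the ceiling `⌈i/h⌉` is written as `(i + h - 1) / h` in natural number division. -/
theorem symbolicPower_le_pow_of_low_degree_containments {R : Type*} [CommRing R]
    (I : Ideal R) (J : ℕ → Ideal R) (d h : ℕ) (hd : 1 ≤ d) (hh : 1 ≤ h)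
    (hJ1 : J 1 = I)
    (hgen : ∀ n : ℕ, 1 ≤ n →
      J n = ⨆ (a : Fin d → ℕ) (_ : ∑ i : Fin d, (i.1 + 1) * a i = n),
              ∏ i : Fin d, J (i.1 + 1) ^ a i)
    (hlow : ∀ i : ℕ, 1 ≤ i → i ≤ d → J i ≤ I ^ ((i + h - 1) / h)) :
    ∀ n : ℕ, 1 ≤ n → J (h * n - h + 1) ≤ I ^ n := by
  intro n hn
  have hm : 1 ≤ h * n - h + 1 := Nat.le_add_left 1 _
  rw [hgen _ hm]
  apply iSup_le; intro a; apply iSup_le; intro hsum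
  set c : Fin d → ℕ := fun i => (i.1 + 1 + h - 1) / h with hc
  have key : ∀ i : Fin d, i.1 + 1 ≤ h * c i := by
    intro i
    have hq := Nat.div_add_mod (i.1 + 1 + h - 1) h
    have hr := Nat.mod_lt (i.1 + 1 + h - 1) (show 0 < h from hh)
    simp only [hc]
    omega
  have hS : n ≤ ∑ i : Fin d, c i * a i := by
    have h1 : h * n - h + 1 ≤ ∑ i : Fin d, (h * c i) * a i := by
      rw [← hsum]
      exact Finset.sum_le_sum fun i _ => Nat.mul_le_mul_right _ (key i)
    have h2 : ∑ i : Fin d, (h * c i) * a i = h * ∑ i : Fin d, c i * a i := by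
      rw [Finset.mul_sum]
      exact Finset.sum_congr rfl fun i _ => by ring
    rw [h2] at h1
    by_contra hcon
    push_neg at hcon
    have : ∑ i : Fin d, c i * a i ≤ n - 1 := by omega
    have h3 : h * ∑ i : Fin d, c i * a i ≤ h * (n - 1) := Nat.mul_le_mul_left _ this
    have h4 : h * (n - 1) = h * n - h := by rw [Nat.mul_sub_one]
    omega
  calc ∏ i : Fin d, J (i.1 + 1) ^ a i
      ≤ ∏ i : Fin d, (I ^ c i) ^ a i := by
        exact ideal_prod_le_prod _ _ _ fun i _ =>
          Ideal.pow_right_mono (hlow _ (Nat.succ_le_succ (Nat.zero_le _)) i.2) _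
      _ = I ^ (∑ i : Fin d, c i * a i) := by
        simp_rw [← pow_mul]
        exact Finset.prod_pow_eq_pow_sum _ _ _
      _ ≤ I ^ n := Ideal.pow_le_pow_right hS
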